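/- Let A be a discrete valuation ring with uniformizer t, and let R be an A-algebra that is torsion-free as an A-module. If the quotient ring R/tR is reduced, then R is integrally closed in the localization R[t⁻¹]: every element of R[t⁻¹] that is integral over R lies in the image of the localization map R → R[t⁻¹]. (Lemma 2.2(1) of the paper.) -/

import Mathlib

/-- Let `A` be a DVR with uniformizer `t` and `R` an `A`-algebra that is torsion-free
as an `A`-module. If `R / tR` is reduced, then `R` is integrally closed in the
localization `R[t⁻¹]`: every element of `R[t⁻¹]` integral over `R` lies in the image
of the localization map `R → R[t⁻¹]`. -/
theorem reduced_special_fiber_implies_integrally_closed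
    (A R : Type*) [CommRing A] [IsDomain A] [IsDiscreteValuationRing A]
    [CommRing R] [Algebra A R] [NoZeroSMulDivisors A R]
    (t : A) (ht : Irreducible t)
    (hred : IsReduced (R ⧸ Ideal.span {algebraMap A R t})) :
    ∀ x : Localization.Away (algebraMap A R t), IsIntegral R x →
      x ∈ (algebraMap R (Localization.Away (algebraMap A R t))).range := by
  set τ : R := algebraMap A R t with hτdef
  set S := Localization.Away τ with hSdef
  set f : R →+* S := algebraMap R S with hfdef
  have ht0 : t ≠ 0 := ht.ne_zero
  -- τ is a non-zero-divisor in R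
  have hτreg : τ ∈ nonZeroDivisors R := by
    rw [mem_nonZeroDivisors_iff_right]
    intro r hr
    have : t • r = 0 := by
      rw [Algebra.smul_def, mul_comm]
      exact hr
    rcases smul_eq_zero.mp this with h | h
    · exact absurd h ht0
    · exact h
  have hinj : Function.Injective f :=
    IsLocalization.injective S (Submonoid.powers_le.mpr hτreg)
  have hunit : IsUnit (f τ) :=
    IsLocalization.map_units S (⟨τ, Submonoid.mem_powers τ⟩ : Submonoid.powers τ)
  intro x hx
  -- get the monic polynomial
  obtain ⟨p, hpmonic, hpeval⟩ := hx
  by_cases hm0 : p.natDegree = 0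
  · -- p = 1, so 1 = 0 in S, everything is in range
    have hp1 : p = 1 := (Polynomial.Monic.natDegree_eq_zero hpmonic).mp hm0
    rw [hp1, Polynomial.eval₂_one] at hpeval
    exact ⟨0, by rw [map_zero]; exact (subsingleton_of_zero_eq_one hpeval.symm).elim _ _⟩
  set m := p.natDegree with hmdef
  have hm1 : 1 ≤ m := Nat.one_le_iff_ne_zero.mpr hm0
  -- descent lemma
  suffices H : ∀ k : ℕ, ∀ r : R, f τ ^ k * x = f r → x ∈ f.range by
    obtain ⟨⟨r, s⟩, hs⟩ := IsLocalization.surj (Submonoid.powers τ) x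
    obtain ⟨k, hk⟩ := s.2
    refine H k r ?_
    have : f (s : R) = f τ ^ k := by rw [← hk]; simp [map_pow]
    rw [← this, mul_comm]
    exact hs
  intro k
  induction k with
  | zero =>
      intro r hr
      rw [pow_zero, one_mul] at hr
      exact ⟨r, hr.symm⟩
  | succ k ih =>
      intro r hr
      -- show τ ∣ r
      have key : τ ∣ r := by
        -- scaled polynomial
        set q := p.scaleRoots (τ ^ (k + 1)) with hqdef
        have hq0 : q.eval₂ f (f (τ ^ (k + 1)) * x) = 0 :=
          Polynomial.scaleRoots_eval₂_eq_zero f hpeval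
        have hfr : f (τ ^ (k + 1)) * x = f r := by rw [map_pow]; exact hr
        rw [hfr, Polynomial.eval₂_at_apply] at hq0
        have hqr : q.eval r = 0 := hinj (by rw [hq0, map_zero])
        have hqdeg : q.natDegree = m := Polynomial.natDegree_scaleRoots p _
        have hqcm : q.coeff m = 1 := by
          rw [← hqdeg]
          exact (Polynomial.monic_scaleRoots_iff _).mpr hpmonic
        -- r^m = - sum of lower terms, each divisible by τ
        have hsum : (0 : R) = ∑ i ∈ Finset.range (m + 1), q.coeff i * r ^ i := by
          rw [← hqr, Polynomial.eval_eq_sum_range, hqdeg]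
        rw [Finset.sum_range_succ, hqcm, one_mul] at hsum
        have hrm : r ^ m = -∑ i ∈ Finset.range m, q.coeff i * r ^ i := by
          linear_combination -hsum
        have hdvd : τ ∣ r ^ m := by
          rw [hrm]
          refine dvd_neg.mpr (Finset.dvd_sum ?_)
          intro i hi
          have him : i < m := Finset.mem_range.mp hi
          have hc : q.coeff i = p.coeff i * (τ ^ (k + 1)) ^ (m - i) :=
            Polynomial.coeff_scaleRoots p _ i
          rw [hc, ← pow_mul]
          have hne : (k + 1) * (m - i) ≠ 0 := Nat.mul_ne_zero (by omega) (by omega)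
          exact ((dvd_pow_self τ hne).mul_left _).mul_right _
        -- reducedness
        have hmem : r ^ m ∈ Ideal.span {τ} := Ideal.mem_span_singleton.mpr hdvd
        have : (Ideal.Quotient.mk (Ideal.span {τ}) r) ^ m = 0 := by
          rw [← map_pow, Ideal.Quotient.eq_zero_iff_mem]
          exact hmem
        have hnil : Ideal.Quotient.mk (Ideal.span {τ}) r = 0 :=
          hred.eq_zero _ ⟨m, this⟩
        exact Ideal.mem_span_singleton.mp (Ideal.Quotient.eq_zero_iff_mem.mp hnil)
      obtain ⟨r', hr'⟩ := key
      refine ih r' ?_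
      refine hunit.mul_left_cancel ?_
      have h1 : f τ * (f τ ^ k * x) = f τ ^ (k + 1) * x := by ring
      rw [h1, hr, hr', map_mul]
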